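/- Fix α ≥ 1 and let 2α < S ≤ 2√(α²+1). The Bell-diagonal two-qubit state with λ₁ = 1/2 + (1/2)√(S²/4 − α²), λ₂ = 1/2 − (1/2)√(S²/4 − α²), λ₃ = λ₄ = 0 has concurrence exactly √(S²/4 − α²), and with observables A₀ = σ_z, A₁ = σ_x, B₀ = cosθ σ_z + sinθ σ_x, B₁ = cosθ σ_z − sinθ σ_x where tanθ = (1/α)√(S²/4 − α²), its α-CHSH value equals S. -/

import Mathlib

open Matrix Kronecker Complex Real ComplexOrder

/-- 2×2 complex matrices (one qubit). -/
abbrev M2 := Matrix (Fin 2) (Fin 2) ℂ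
/-- 4×4 complex matrices (two qubits), indexed by `Fin 2 × Fin 2`. -/
abbrev M4 := Matrix (Fin 2 × Fin 2) (Fin 2 × Fin 2) ℂ

noncomputable def σx : M2 := !![0, 1; 1, 0]
noncomputable def σy : M2 := !![0, -Complex.I; Complex.I, 0]
noncomputable def σz : M2 := !![1, 0; 0, -1]

/-- A ±1-valued qubit observable: Hermitian involution. -/
def IsObs (A : M2) : Prop := A.IsHermitian ∧ A * A = 1

/-- A two-qubit density operator. -/
def IsState (ρ : M4) : Prop := ρ.PosSemidef ∧ ρ.trace = 1

/-- The α-CHSH Bell operator. -/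
noncomputable def Sop (α : ℝ) (A0 A1 B0 B1 : M2) : M4 :=
  (α : ℂ) • (A0 ⊗ₖ B0 + A0 ⊗ₖ B1) + A1 ⊗ₖ B0 - A1 ⊗ₖ B1

/-- The α-CHSH Bell value of a state with given observables. -/
noncomputable def BellValue (ρ : M4) (α : ℝ) (A0 A1 B0 B1 : M2) : ℂ :=
  (ρ * Sop α A0 A1 B0 B1).trace

/-- Computational basis vectors of ℂ²⊗ℂ². -/
def ket (i j : Fin 2) : Fin 2 × Fin 2 → ℂ := fun p => if p = (i, j) then 1 else 0

noncomputable def PhiP : Fin 2 × Fin 2 → ℂ := ((Real.sqrt 2 : ℂ))⁻¹ • (ket 0 0 + ket 1 1)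
noncomputable def PhiM : Fin 2 × Fin 2 → ℂ := ((Real.sqrt 2 : ℂ))⁻¹ • (ket 0 0 - ket 1 1)
noncomputable def PsiP : Fin 2 × Fin 2 → ℂ := ((Real.sqrt 2 : ℂ))⁻¹ • (ket 0 1 + ket 1 0)
noncomputable def PsiM : Fin 2 × Fin 2 → ℂ := ((Real.sqrt 2 : ℂ))⁻¹ • (ket 0 1 - ket 1 0)

/-- Rank-one projector |v⟩⟨v|. -/
noncomputable def proj (v : Fin 2 × Fin 2 → ℂ) : M4 := Matrix.vecMulVec v (star v)

/-- Bell-diagonal two-qubit state. -/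
noncomputable def BellDiag (l1 l2 l3 l4 : ℝ) : M4 :=
  (l1 : ℂ) • proj PhiP + (l2 : ℂ) • proj PhiM + (l3 : ℂ) • proj PsiP + (l4 : ℂ) • proj PsiM

noncomputable def YY : M4 := σy ⊗ₖ σy

attribute [local instance] Classical.propDecidable

/-- The positive semidefinite square root of a positive semidefinite matrix (the definition
`Matrix.PosSemidef.sqrt` of the older Mathlib, removed since). -/
noncomputable def Matrix.PosSemidef.sqrt {n : Type*} [Fintype n] [DecidableEq n] {A : Matrix n n ℂ}
    (hA : A.PosSemidef) : Matrix n n ℂ :=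
  (hA.1.eigenvectorUnitary : Matrix n n ℂ) * diagonal ((↑) ∘ (√·) ∘ hA.1.eigenvalues) *
    (star hA.1.eigenvectorUnitary : Matrix n n ℂ)

/-- Concurrence of a two-qubit state: `max {0, μ₁ − μ₂ − μ₃ − μ₄}` where the `μᵢ` are the
decreasingly ordered square roots of the eigenvalues of `√ρ (σy⊗σy) ρ* (σy⊗σy) √ρ`
(for the decreasingly ordered values, `μ₁ − μ₂ − μ₃ − μ₄ = 2 max μᵢ − ∑ μᵢ`). -/
noncomputable def concurrence (ρ : M4) : ℝ :=
  if hρ : ρ.PosSemidef then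
    if hX : (hρ.sqrt * (YY * ρ.map (starRingEnd ℂ) * YY) * hρ.sqrt).IsHermitian then
      let μ : Fin 2 × Fin 2 → ℝ := fun p => Real.sqrt (hX.eigenvalues p)
      max 0 (2 * (Finset.univ.sup' Finset.univ_nonempty μ) - ∑ p, μ p)
    else 0
  else 0

noncomputable def rhom (r : ℝ) : M4 := Matrix.of fun p q =>
  if p = ((0:Fin 2),(0:Fin 2)) ∧ q = ((0:Fin 2),(0:Fin 2)) ∨ p = (1,1) ∧ q = (1,1) then (1/2 : ℂ)
  else if p = ((0:Fin 2),(0:Fin 2)) ∧ q = (1,1) ∨ p = (1,1) ∧ q = ((0:Fin 2),(0:Fin 2)) then (r/2 : ℂ)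
  else 0

set_option maxHeartbeats 1000000 in
lemma bellDiag_eq (r : ℝ) : BellDiag (1/2 + r/2) (1/2 - r/2) 0 0 = rhom r := by
  have h2 : ((Real.sqrt 2 : ℝ) : ℂ)⁻¹ * ((Real.sqrt 2 : ℝ) : ℂ)⁻¹ = 1/2 := by
    rw [← mul_inv, ← Complex.ofReal_mul, Real.mul_self_sqrt (by norm_num)]
    norm_num
  ext ⟨i,j⟩ ⟨k,l⟩
  simp only [BellDiag, proj, Matrix.add_apply, Matrix.smul_apply, vecMulVec_apply,
    PhiP, PhiM, PsiP, PsiM, Pi.smul_apply, Pi.add_apply, Pi.sub_apply, Pi.star_apply,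
    ket, rhom, Matrix.of_apply, smul_eq_mul, star_mul', star_inv₀,
    RingHom.coe_coe, Complex.star_def, Complex.conj_ofReal, apply_ite (starRingEnd ℂ),
    _root_.map_one, _root_.map_zero,
    Complex.ofReal_zero, Complex.ofReal_add, Complex.ofReal_sub, Complex.ofReal_div,
    Complex.ofReal_one, Complex.ofReal_ofNat]
  fin_cases i <;> fin_cases j <;> fin_cases k <;> fin_cases l <;>
    norm_num [Prod.ext_iff] <;> ring_nf <;>
    rw [(by ring : ((Real.sqrt 2:ℝ):ℂ)⁻¹ ^2 = ((Real.sqrt 2:ℝ):ℂ)⁻¹ * ((Real.sqrt 2:ℝ):ℂ)⁻¹), h2]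

set_option maxHeartbeats 1000000 in
lemma trace_sq (r : ℝ) : (rhom r * rhom r).trace = (((1+r)^2/4 + (1-r)^2/4 : ℝ) : ℂ) := by
  simp [Matrix.trace, Matrix.diag, Matrix.mul_apply, Fintype.sum_prod_type, Fin.sum_univ_two, rhom,
    Prod.ext_iff]
  push_cast; ring

set_option maxHeartbeats 1000000 in
lemma trace_pow4 (r : ℝ) : ((rhom r * rhom r) * (rhom r * rhom r)).trace
    = ((((1+r)^2/4)^2 + ((1-r)^2/4)^2 : ℝ) : ℂ) := by
  simp [Matrix.trace, Matrix.diag, Matrix.mul_apply, Fintype.sum_prod_type, Fin.sum_univ_two, rhom,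
    Prod.ext_iff]
  push_cast; ring

set_option maxHeartbeats 4000000 in
lemma cubic (r : ℝ) :
    (rhom r * rhom r) * (rhom r * rhom r) * (rhom r * rhom r)
      - (((1+r)^2/4 + (1-r)^2/4 : ℝ) : ℂ) • ((rhom r * rhom r) * (rhom r * rhom r))
      + (((1+r)^2/4 * ((1-r)^2/4) : ℝ) : ℂ) • (rhom r * rhom r) = 0 := by
  ext ⟨i,j⟩ ⟨k,l⟩
  fin_cases i <;> fin_cases j <;> fin_cases k <;> fin_cases l <;>
    simp [Matrix.mul_apply, Fintype.sum_prod_type, Fin.sum_univ_two, rhom, Prod.ext_iff] <;>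
    (push_cast; ring)

set_option maxHeartbeats 1000000 in
lemma rhom_conj (r : ℝ) : (rhom r).map (starRingEnd ℂ) = rhom r := by
  ext ⟨i,j⟩ ⟨k,l⟩
  fin_cases i <;> fin_cases j <;> fin_cases k <;> fin_cases l <;>
    simp [rhom, Prod.ext_iff, map_ofNat]

set_option maxHeartbeats 2000000 in
lemma YY_rhom (r : ℝ) : YY * rhom r * YY = rhom r := by
  ext ⟨i,j⟩ ⟨k,l⟩
  fin_cases i <;> fin_cases j <;> fin_cases k <;> fin_cases l <;>
    simp [Matrix.mul_apply, Fintype.sum_prod_type, Fin.sum_univ_two, rhom, YY,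
      kroneckerMap_apply, σy, Prod.ext_iff]

set_option maxHeartbeats 1000000 in
lemma rhom_herm (r : ℝ) : (rhom r).IsHermitian := by
  ext ⟨i,j⟩ ⟨k,l⟩
  fin_cases i <;> fin_cases j <;> fin_cases k <;> fin_cases l <;>
    simp [rhom, Prod.ext_iff, Matrix.conjTranspose_apply, map_ofNat]

lemma Matrix.PosSemidef.sqrt_mul_self {n : Type*} [Fintype n] [DecidableEq n]
    {A : Matrix n n ℂ} (hA : A.PosSemidef) : hA.sqrt * hA.sqrt = A := by
  set U : Matrix n n ℂ := (hA.1.eigenvectorUnitary : Matrix n n ℂ) with hUdef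
  have hU : star U * U = 1 := Matrix.mem_unitaryGroup_iff'.mp (hA.1.eigenvectorUnitary).2
  unfold Matrix.PosSemidef.sqrt
  conv_rhs => rw [hA.1.spectral_theorem, Unitary.conjStarAlgAut_apply]
  rw [← hUdef]
  set D : Matrix n n ℂ := diagonal ((↑) ∘ (√·) ∘ hA.1.eigenvalues) with hD
  rw [show U * D * star U * (U * D * star U) = U * D * (star U * U) * D * star U by
    simp only [mul_assoc], hU, mul_one, mul_assoc U D D, hD, diagonal_mul_diagonal]
  congr 2
  congr 1
  funext i
  simp only [Function.comp_apply]
  rw [← Complex.ofReal_mul, Real.mul_self_sqrt (hA.eigenvalues_nonneg i)]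
  rfl

lemma rhom_psd {r : ℝ} (h0 : 0 ≤ r) (h1 : r ≤ 1) : (rhom r).PosSemidef := by
  refine Matrix.PosSemidef.of_dotProduct_mulVec_nonneg (rhom_herm r) fun x => ?_
  have expand : star x ⬝ᵥ (rhom r *ᵥ x) =
      (((1-r)/2 : ℝ) : ℂ) * (star (x (0,0)) * x (0,0) + star (x (1,1)) * x (1,1))
      + ((r/2 : ℝ) : ℂ) * (star (x (0,0) + x (1,1)) * (x (0,0) + x (1,1))) := by
    simp [dotProduct, Matrix.mulVec, rhom, Fintype.sum_prod_type, Fin.sum_univ_two,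
      Prod.ext_iff]
    push_cast; ring
  rw [expand]
  have c1 : (0:ℂ) ≤ (((1-r)/2 : ℝ) : ℂ) := by
    rw [Complex.zero_le_real]; linarith
  have c2 : (0:ℂ) ≤ ((r/2 : ℝ) : ℂ) := by
    rw [Complex.zero_le_real]; linarith
  refine add_nonneg (mul_nonneg c1 (add_nonneg ?_ ?_)) (mul_nonneg c2 ?_) <;>
    exact star_mul_self_nonneg _

set_option maxHeartbeats 1000000 in
lemma bell_trace (r α cs sn : ℝ) :
    BellValue (rhom r) α σz σx ((cs:ℂ) • σz + (sn:ℂ) • σx) ((cs:ℂ) • σz - (sn:ℂ) • σx)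
      = ((2*α*cs + 2*r*sn : ℝ) : ℂ) := by
  simp [BellValue, Sop, Matrix.trace, Matrix.diag, Matrix.mul_apply, Fintype.sum_prod_type,
    Fin.sum_univ_two, rhom, σz, σx, kroneckerMap_apply, Prod.ext_iff]
  push_cast; ring

section EigAux
variable {n : Type*} [Fintype n] [DecidableEq n] {A : Matrix n n ℂ}

lemma trace_eq_sum_eig (hA : A.IsHermitian) : A.trace = ((∑ p, hA.eigenvalues p : ℝ) : ℂ) := by
  conv_lhs => rw [hA.spectral_theorem]
  rw [Unitary.conjStarAlgAut_apply, Matrix.trace_mul_cycle,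
    show (star (hA.eigenvectorUnitary : Matrix n n ℂ)) * (hA.eigenvectorUnitary : Matrix n n ℂ) = 1
      from Matrix.mem_unitaryGroup_iff'.mp (hA.eigenvectorUnitary).2,
    one_mul, Matrix.trace_diagonal]
  push_cast; rfl

lemma trace_sq_eq_sum_eig_sq (hA : A.IsHermitian) :
    (A * A).trace = ((∑ p, hA.eigenvalues p ^ 2 : ℝ) : ℂ) := by
  set U : Matrix n n ℂ := (hA.eigenvectorUnitary : Matrix n n ℂ) with hUdef
  set D : Matrix n n ℂ := Matrix.diagonal (RCLike.ofReal ∘ hA.eigenvalues) with hDdef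
  have hU : star U * U = 1 := Matrix.mem_unitaryGroup_iff'.mp (hA.eigenvectorUnitary).2
  have key : A * A = U * (D * D) * star U := by
    conv_lhs => rw [hA.spectral_theorem, Unitary.conjStarAlgAut_apply]
    calc (U*D*star U)*(U*D*star U) = U*D*(star U*(U*(D*star U))) := by simp only [mul_assoc]
      _ = U*D*((star U*U)*(D*star U)) := by rw [← mul_assoc (star U) U]
      _ = U*(D*D)*star U := by rw [hU, one_mul]; simp only [mul_assoc]
  rw [key, Matrix.trace_mul_cycle, ← mul_assoc, hU, one_mul, hDdef,
    Matrix.diagonal_mul_diagonal, Matrix.trace_diagonal]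
  push_cast
  simp [pow_two]

lemma eig_cubic (hA : A.IsHermitian) {b c : ℝ}
    (h : A * A * A - (b : ℂ) • (A * A) + (c : ℂ) • A = 0) (p : n) :
    hA.eigenvalues p ^ 3 - b * hA.eigenvalues p ^ 2 + c * hA.eigenvalues p = 0 := by
  set v := ⇑(hA.eigenvectorBasis p) with hv
  have hv0 : v ≠ 0 := by
    intro h0
    exact hA.eigenvectorBasis.orthonormal.ne_zero p (by ext i; exact congrFun h0 i)
  set e := hA.eigenvalues p with he
  have h1 : A *ᵥ v = e • v := hA.mulVec_eigenvectorBasis p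
  have h2 : (A * A) *ᵥ v = (e^2) • v := by
    rw [← Matrix.mulVec_mulVec, h1, Matrix.mulVec_smul, h1, smul_smul, pow_two]
  have h3 : (A * A * A) *ᵥ v = (e^3) • v := by
    rw [← Matrix.mulVec_mulVec, h1, Matrix.mulVec_smul, h2, smul_smul]
    congr 1; ring
  have := congrArg (fun M => M *ᵥ v) h
  simp only [Matrix.add_mulVec, Matrix.sub_mulVec, Matrix.smul_mulVec, h1, h2, h3,
    Matrix.zero_mulVec] at this
  obtain ⟨i, hi⟩ := Function.ne_iff.mp hv0
  have h4 := congrFun this i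
  simp only [Pi.add_apply, Pi.sub_apply, Pi.smul_apply, Pi.zero_apply, smul_eq_mul,
    Complex.real_smul] at h4
  have h5 : ((e^3 - b * e^2 + c * e : ℝ) : ℂ) * v i = 0 := by
    push_cast
    push_cast at h4
    linear_combination h4
  rcases mul_eq_zero.mp h5 with h0 | h0
  · exact_mod_cast h0
  · simp [h0] at hi

end EigAux

lemma core_concurrence (r : ℝ) (h0 : 0 < r) (h1 : r ≤ 1) (e : Fin 2 × Fin 2 → ℝ)
    (hcub : ∀ p, e p ^ 3 - ((1+r)^2/4 + (1-r)^2/4) * e p ^ 2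
      + ((1+r)^2/4 * ((1-r)^2/4)) * e p = 0)
    (hs : ∑ p, e p = (1+r)^2/4 + (1-r)^2/4)
    (hq : ∑ p, e p ^ 2 = ((1+r)^2/4)^2 + ((1-r)^2/4)^2) :
    max 0 (2 * (Finset.univ.sup' Finset.univ_nonempty (fun p => Real.sqrt (e p)))
      - ∑ p, Real.sqrt (e p)) = r := by
  set P : ℝ := (1+r)^2/4 with hP
  set Q : ℝ := (1-r)^2/4 with hQ
  have hPpos : 0 < P := by positivity
  have hQP : Q < P := by nlinarith
  have hQ0 : 0 ≤ Q := by positivity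
  have hmem : ∀ p, e p = 0 ∨ e p = P ∨ e p = Q := by
    intro p
    have h := hcub p
    have : e p * ((e p - P) * (e p - Q)) = 0 := by linear_combination h
    rcases mul_eq_zero.mp this with h' | h'
    · exact Or.inl h'
    · rcases mul_eq_zero.mp h' with h'' | h''
      · exact Or.inr (Or.inl (by linarith))
      · exact Or.inr (Or.inr (by linarith))
  have sqrtP : Real.sqrt P = (1+r)/2 := by
    rw [show P = ((1+r)/2)^2 by ring, Real.sqrt_sq (by linarith)]
  have sqrtQ : Real.sqrt Q = (1-r)/2 := by
    rw [show Q = ((1-r)/2)^2 by ring, Real.sqrt_sq (by linarith)]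
  have hsum : ∑ p, Real.sqrt (e p) = 1 := by
    rcases eq_or_lt_of_le h1 with hr1 | hr1
    · have hQ1 : Q = 0 := by rw [hQ, hr1]; norm_num
      have hP1 : P = 1 := by rw [hP, hr1]; norm_num
      have : ∀ p, Real.sqrt (e p) = e p := by
        intro p
        rcases hmem p with h' | h' | h' <;> rw [h'] <;> simp [hP1, hQ1]
      rw [Finset.sum_congr rfl (fun p _ => this p), hs, hP1, hQ1]; norm_num
    · have hne : r^2 - 1 ≠ 0 := by nlinarith
      set A : ℝ := -(3 + r^2)/(r^2 - 1) with hA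
      set B : ℝ := 4/(r^2 - 1) with hB
      have interp : ∀ p, Real.sqrt (e p) = A * e p + B * e p ^ 2 := by
        intro p
        rcases hmem p with h' | h' | h' <;> rw [h']
        · simp
        · rw [sqrtP, hP, hA, hB]; field_simp; ring
        · rw [sqrtQ, hQ, hA, hB]; field_simp; ring
      rw [Finset.sum_congr rfl (fun p _ => interp p)]
      rw [Finset.sum_add_distrib, ← Finset.mul_sum, ← Finset.mul_sum, hs, hq,
        hP, hQ, hA, hB]
      field_simp; ring
  have hub : ∀ p, Real.sqrt (e p) ≤ (1+r)/2 := by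
    intro p
    rcases hmem p with h' | h' | h' <;> rw [h']
    · simp; linarith
    · rw [sqrtP]
    · rw [sqrtQ]; linarith
  have hex : ∃ p, e p = P := by
    by_contra hno
    push_neg at hno
    have hle : ∀ p, e p ^ 2 ≤ Q * e p := by
      intro p
      rcases hmem p with h' | h' | h' <;> rw [h']
      · simp
      · exact absurd h' (hno p)
      · nlinarith
    have : ∑ p, e p ^ 2 ≤ Q * ∑ p, e p := by
      rw [Finset.mul_sum]
      exact Finset.sum_le_sum fun p _ => hle p
    rw [hq, hs] at this
    nlinarith
  obtain ⟨p0, hp0⟩ := hex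
  have hsup : Finset.univ.sup' Finset.univ_nonempty (fun p => Real.sqrt (e p)) = (1+r)/2 := by
    apply le_antisymm
    · exact Finset.sup'_le _ _ fun p _ => hub p
    · refine le_trans ?_ (Finset.le_sup' (fun p => Real.sqrt (e p)) (Finset.mem_univ p0))
      rw [hp0, sqrtP]
  rw [hsup, hsum, show 2 * ((1+r)/2) - 1 = r by ring]
  exact max_eq_right h0.le

/-- The Bell-diagonal state with `λ₁ = 1/2 + √(S²/4−α²)/2`, `λ₂ = 1/2 − √(S²/4−α²)/2`,
`λ₃ = λ₄ = 0` has concurrence exactly `√(S²/4−α²)`, and with the observables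
`A₀ = σz`, `A₁ = σx`, `B₀ = cosθ σz + sinθ σx`, `B₁ = cosθ σz − sinθ σx`,
`tanθ = (1/α)√(S²/4−α²)`, its α-CHSH value equals `S`. -/
theorem concurrence_bound_saturated (α S : ℝ) (hα : 1 ≤ α)
    (hS1 : 2 * α < S) (hS2 : S ≤ 2 * Real.sqrt (α ^ 2 + 1)) :
    let c := Real.sqrt (S ^ 2 / 4 - α ^ 2)
    let ρ := BellDiag (1 / 2 + c / 2) (1 / 2 - c / 2) 0 0
    let θ := Real.arctan ((1 / α) * c)
    let B0 : M2 := (Real.cos θ : ℂ) • σz + (Real.sin θ : ℂ) • σx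
    let B1 : M2 := (Real.cos θ : ℂ) • σz - (Real.sin θ : ℂ) • σx
    concurrence ρ = c ∧ BellValue ρ α σz σx B0 B1 = (S : ℂ) := by
  intro c ρ θ B0 B1
  have hα0 : 0 < α := lt_of_lt_of_le one_pos hα
  have hS0 : 0 < S := by linarith
  have hgt : α ^ 2 < S ^ 2 / 4 := by nlinarith
  have hc2 : c ^ 2 = S ^ 2 / 4 - α ^ 2 := Real.sq_sqrt (by linarith)
  have hc0 : 0 < c := Real.sqrt_pos.mpr (by linarith)
  have hc1 : c ≤ 1 := by
    have hs2' : S ^ 2 ≤ 4 * (α ^ 2 + 1) := by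
      nlinarith [Real.sq_sqrt (show (0:ℝ) ≤ α ^ 2 + 1 by positivity),
        Real.sqrt_nonneg (α ^ 2 + 1)]
    nlinarith
  have hρeq : ρ = rhom c := bellDiag_eq c
  have hpsd : (rhom c).PosSemidef := rhom_psd hc0.le hc1
  have hZherm : (rhom c * rhom c).IsHermitian := by
    unfold Matrix.IsHermitian
    rw [Matrix.conjTranspose_mul, (rhom_herm c).eq]
  have hZpsd : (rhom c * rhom c).PosSemidef := by
    have := Matrix.posSemidef_conjTranspose_mul_self (rhom c)
    rwa [(rhom_herm c).eq] at this
  constructor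
  · rw [hρeq]
    unfold concurrence
    rw [dif_pos hpsd]
    have hXeq : hpsd.sqrt * (YY * (rhom c).map (starRingEnd ℂ) * YY) * hpsd.sqrt
        = rhom c * rhom c := by
      rw [rhom_conj, YY_rhom]
      have h := hpsd.sqrt_mul_self
      have step1 : hpsd.sqrt * rhom c * hpsd.sqrt
          = hpsd.sqrt * (hpsd.sqrt * hpsd.sqrt) * hpsd.sqrt := by rw [h]
      rw [step1, show hpsd.sqrt * (hpsd.sqrt * hpsd.sqrt) * hpsd.sqrt
          = (hpsd.sqrt * hpsd.sqrt) * (hpsd.sqrt * hpsd.sqrt) by simp only [mul_assoc], h]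
    rw [hXeq, dif_pos hZherm]
    have hs : ∑ p, hZherm.eigenvalues p = (1+c)^2/4 + (1-c)^2/4 := by
      have h1 := trace_eq_sum_eig hZherm
      have h2 := trace_sq c
      rw [h2] at h1
      exact_mod_cast h1.symm
    have hq : ∑ p, hZherm.eigenvalues p ^ 2 = ((1+c)^2/4)^2 + ((1-c)^2/4)^2 := by
      have h1 := trace_sq_eq_sum_eig_sq hZherm
      have h2 := trace_pow4 c
      rw [h2] at h1
      exact_mod_cast h1.symm
    exact core_concurrence c hc0 hc1 hZherm.eigenvalues (eig_cubic hZherm (cubic c)) hs hq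
  · have h14 : Real.sqrt (1 + ((1/α) * c) ^ 2) = S / (2*α) := by
      rw [show 1 + ((1/α) * c) ^ 2 = (S / (2*α)) ^ 2 by
        field_simp
        linear_combination 4 * hc2]
      exact Real.sqrt_sq (by positivity)
    have hcos : Real.cos θ = 2*α/S := by
      rw [Real.cos_arctan, h14, one_div_div]
    have hsin : Real.sin θ = 2*c/S := by
      rw [Real.sin_arctan, h14]
      field_simp
    show BellValue ρ α σz σx
        ((Real.cos θ : ℂ) • σz + (Real.sin θ : ℂ) • σx)
        ((Real.cos θ : ℂ) • σz - (Real.sin θ : ℂ) • σx) = (S : ℂ)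
    rw [hρeq, bell_trace c α (Real.cos θ) (Real.sin θ), hcos, hsin]
    norm_cast
    field_simp
    linear_combination 4 * hc2
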